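/- The equation sin(2a) − 2a/3 = 0 has exactly one solution in a > 0, and this solution lies in the interval (1.13, 1.14). -/

import Mathlib

open Real

private lemma nonneg_of_deriv {f f' : ℝ → ℝ} (hd : ∀ y, HasDerivAt f (f' y) y)
    (h0 : f 0 = 0) (hf' : ∀ y, 0 < y → 0 ≤ f' y) {x : ℝ} (hx : 0 ≤ x) : 0 ≤ f x := by
  have hdiff : Differentiable ℝ f := fun y => (hd y).differentiableAt
  have hmono : MonotoneOn f (Set.Ici 0) := by
    apply monotoneOn_of_deriv_nonneg (convex_Ici 0) hdiff.continuous.continuousOn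
    · exact fun y _ => (hdiff y).differentiableWithinAt
    · intro y hy
      rw [interior_Ici] at hy
      rw [(hd y).deriv]
      exact hf' y hy
  have := hmono Set.self_mem_Ici hx hx
  simpa [h0] using this

private lemma sin_ge3 {x : ℝ} (hx : 0 ≤ x) : x - x^3/6 ≤ sin x := by
  have := nonneg_of_deriv (f := fun y => sin y - (y - y^3/6))
      (f' := fun y => cos y - (1 - y^2/2))
      (fun y => by
        have h := (Real.hasDerivAt_sin y).sub
          ((hasDerivAt_id y).sub ((hasDerivAt_pow 3 y).div_const 6))
        exact h.congr_deriv (by ring))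
      (by simp)
      (fun y _ => by have := Real.one_sub_sq_div_two_le_cos (x := y); linarith) hx
  linarith [this]

private lemma cos_le4 {x : ℝ} (hx : 0 ≤ x) : cos x ≤ 1 - x^2/2 + x^4/24 := by
  have := nonneg_of_deriv (f := fun y => (1 - y^2/2 + y^4/24) - cos y)
      (f' := fun y => (- y + y^3/6) + sin y)
      (fun y => by
        have h := (((hasDerivAt_pow 2 y).div_const 2).neg.add
          ((hasDerivAt_pow 4 y).div_const 24)).sub (Real.hasDerivAt_cos y)
        have h2 : HasDerivAt (fun y : ℝ => 1 - y^2/2 + y^4/24 - cos y)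
            (-(2 * y ^ 1 / 2) + 4 * y ^ 3 / 24 - (-sin y)) y := by
          have h3 := ((((hasDerivAt_pow 2 y).div_const 2).const_sub 1).add
            ((hasDerivAt_pow 4 y).div_const 24)).sub (Real.hasDerivAt_cos y)
          exact h3.congr_deriv (by ring)
        convert h2 using 1 <;> ring)
      (by simp)
      (fun y hy => by have := sin_ge3 hy.le; linarith) hx
  linarith [this]

private lemma sin_le5 {x : ℝ} (hx : 0 ≤ x) : sin x ≤ x - x^3/6 + x^5/120 := by
  have := nonneg_of_deriv (f := fun y => (y - y^3/6 + y^5/120) - sin y)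
      (f' := fun y => (1 - y^2/2 + y^4/24) - cos y)
      (fun y => by
        have h := (((hasDerivAt_id y).sub ((hasDerivAt_pow 3 y).div_const 6)).add
          ((hasDerivAt_pow 5 y).div_const 120)).sub (Real.hasDerivAt_sin y)
        exact h.congr_deriv (by ring))
      (by simp)
      (fun y hy => by have := cos_le4 hy.le; linarith) hx
  linarith [this]

private lemma cos_ge6 {x : ℝ} (hx : 0 ≤ x) : 1 - x^2/2 + x^4/24 - x^6/720 ≤ cos x := by
  have := nonneg_of_deriv (f := fun y => cos y - (1 - y^2/2 + y^4/24 - y^6/720))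
      (f' := fun y => (y - y^3/6 + y^5/120) - sin y)
      (fun y => by
        have h := (Real.hasDerivAt_cos y).sub
          (((((hasDerivAt_pow 2 y).div_const 2).const_sub 1).add
            ((hasDerivAt_pow 4 y).div_const 24)).sub ((hasDerivAt_pow 6 y).div_const 720))
        exact h.congr_deriv (by ring))
      (by simp)
      (fun y hy => by have := sin_le5 hy.le; linarith) hx
  linarith [this]

private lemma sin_ge7 {x : ℝ} (hx : 0 ≤ x) : x - x^3/6 + x^5/120 - x^7/5040 ≤ sin x := by
  have := nonneg_of_deriv (f := fun y => sin y - (y - y^3/6 + y^5/120 - y^7/5040))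
      (f' := fun y => cos y - (1 - y^2/2 + y^4/24 - y^6/720))
      (fun y => by
        have h := (Real.hasDerivAt_sin y).sub
          ((((hasDerivAt_id y).sub ((hasDerivAt_pow 3 y).div_const 6)).add
            ((hasDerivAt_pow 5 y).div_const 120)).sub ((hasDerivAt_pow 7 y).div_const 5040))
        exact h.congr_deriv (by ring))
      (by simp)
      (fun y hy => by have := cos_ge6 hy.le; linarith) hx
  linarith [this]

private lemma cos_le8 {x : ℝ} (hx : 0 ≤ x) :
    cos x ≤ 1 - x^2/2 + x^4/24 - x^6/720 + x^8/40320 := by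
  have := nonneg_of_deriv
      (f := fun y => (1 - y^2/2 + y^4/24 - y^6/720 + y^8/40320) - cos y)
      (f' := fun y => (- y + y^3/6 - y^5/120 + y^7/5040) + sin y)
      (fun y => by
        have h := ((((((hasDerivAt_pow 2 y).div_const 2).const_sub 1).add
          ((hasDerivAt_pow 4 y).div_const 24)).sub ((hasDerivAt_pow 6 y).div_const 720)).add
          ((hasDerivAt_pow 8 y).div_const 40320)).sub (Real.hasDerivAt_cos y)
        exact h.congr_deriv (by ring))
      (by simp)
      (fun y hy => by have := sin_ge7 hy.le; linarith) hx
  linarith [this]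

private lemma sin_le9 {x : ℝ} (hx : 0 ≤ x) :
    sin x ≤ x - x^3/6 + x^5/120 - x^7/5040 + x^9/362880 := by
  have := nonneg_of_deriv
      (f := fun y => (y - y^3/6 + y^5/120 - y^7/5040 + y^9/362880) - sin y)
      (f' := fun y => (1 - y^2/2 + y^4/24 - y^6/720 + y^8/40320) - cos y)
      (fun y => by
        have h := (((((hasDerivAt_id y).sub ((hasDerivAt_pow 3 y).div_const 6)).add
          ((hasDerivAt_pow 5 y).div_const 120)).sub ((hasDerivAt_pow 7 y).div_const 5040)).add
          ((hasDerivAt_pow 9 y).div_const 362880)).sub (Real.hasDerivAt_sin y)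
        exact h.congr_deriv (by ring))
      (by simp)
      (fun y hy => by have := cos_le8 hy.le; linarith) hx
  linarith [this]

private lemma sinA : (113/150 : ℝ) < sin 2.26 := by
  have h := sin_ge7 (x := 2.26) (by norm_num)
  nlinarith [h]

private lemma sinB : sin 2.28 < (0.76 : ℝ) := by
  have h := sin_le9 (x := 2.28) (by norm_num)
  nlinarith [h]

private lemma fHasDeriv (x : ℝ) :
    HasDerivAt (fun a : ℝ => sin (2*a) - 2*a/3) (2 * cos (2*x) - 2/3) x := by
  have h1 : HasDerivAt (fun a : ℝ => sin (2*a)) (cos (2*x) * 2) x := by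
    have hin : HasDerivAt (fun a : ℝ => 2*a) 2 x := by
      simpa using (hasDerivAt_id x).const_mul 2
    exact (Real.hasDerivAt_sin (2*x)).comp x hin
  have h2 : HasDerivAt (fun a : ℝ => 2*a/3) (2/3) x := by
    simpa using ((hasDerivAt_id x).const_mul 2).div_const 3
  have := h1.sub h2
  exact this.congr_deriv (by ring)

private lemma fanti : StrictAntiOn (fun a : ℝ => sin (2*a) - 2*a/3) (Set.Icc 1.13 1.5) := by
  apply strictAntiOn_of_deriv_neg (convex_Icc _ _)
    (Continuous.continuousOn (by continuity))
  intro x hx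
  rw [interior_Icc] at hx
  rw [(fHasDeriv x).deriv]
  have hπ1 : (3.14 : ℝ) < π := by
    have := Real.pi_gt_d6; linarith
  have hπ2 : π < (3.15 : ℝ) := by
    have := Real.pi_lt_d6; linarith
  have hcos : cos (2*x) < 0 := by
    apply Real.cos_neg_of_pi_div_two_lt_of_lt
    · have : (1.13 : ℝ) < x := hx.1
      linarith
    · have : x < (1.5 : ℝ) := hx.2
      linarith
  linarith

theorem degenerate_root :
    (∃! a : ℝ, 0 < a ∧ sin (2*a) - 2*a/3 = 0) ∧
      ∀ a : ℝ, 0 < a → sin (2*a) - 2*a/3 = 0 → a ∈ Set.Ioo (1.13 : ℝ) 1.14 := by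
  have hπ1 : (3.14 : ℝ) < π := by have := Real.pi_gt_d6; linarith
  have hπ2 : π < (3.15 : ℝ) := by have := Real.pi_lt_d6; linarith
  have h13 : (0:ℝ) < sin (2*(1.13:ℝ)) - 2*1.13/3 := by
    have hA := sinA
    have h226 : (2*(1.13:ℝ)) = 2.26 := by norm_num
    rw [h226]; nlinarith [hA]
  have h14 : sin (2*(1.14:ℝ)) - 2*1.14/3 < 0 := by
    have hB := sinB
    have h228 : (2*(1.14:ℝ)) = 2.28 := by norm_num
    rw [h228]; nlinarith [hB]
  -- Part 2: every positive root lies in (1.13, 1.14)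
  have part2 : ∀ a : ℝ, 0 < a → sin (2*a) - 2*a/3 = 0 → a ∈ Set.Ioo (1.13 : ℝ) 1.14 := by
    intro a ha hfa
    by_contra hcon
    rw [Set.mem_Ioo, not_and_or, not_lt, not_lt] at hcon
    rcases hcon with hle | hge
    · -- a ≤ 1.13 : use concavity of sin on [0, π]
      have hmem0 : (0:ℝ) ∈ Set.Icc 0 π := ⟨le_rfl, Real.pi_pos.le⟩
      have hmem1 : (2.26:ℝ) ∈ Set.Icc 0 π := ⟨by norm_num, by linarith⟩
      set t : ℝ := a / 1.13 with htdef
      have ht0 : 0 < t := by positivity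
      have ht1 : t ≤ 1 := by
        rw [htdef, div_le_one (by norm_num)]; exact hle
      have hconc := strictConcaveOn_sin_Icc.concaveOn.2 hmem0 hmem1
        (by linarith : (0:ℝ) ≤ 1 - t) ht0.le (by ring)
      have harg : (1 - t) • (0:ℝ) + t • (2.26:ℝ) = 2 * a := by
        simp only [smul_eq_mul, htdef]
        rw [mul_zero, zero_add, div_mul_eq_mul_div,
          div_eq_iff (show (1.13:ℝ) ≠ 0 by norm_num)]
        ring
      rw [harg] at hconc
      simp only [smul_eq_mul, Real.sin_zero, mul_zero, zero_add] at hconc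
      have hA := sinA
      have hkey : 2 * a / 3 < sin (2 * a) := by
        have hc1 : t * (113/150) < t * sin 2.26 := (mul_lt_mul_iff_right₀ ht0).2 hA
        have hc2 : 2 * a / 3 = t * (113/150) := by
          rw [htdef, div_mul_eq_mul_div, eq_div_iff (show (1.13:ℝ) ≠ 0 by norm_num)]
          ring
        linarith [hconc]
      linarith [hfa, hkey]
    · -- a ≥ 1.14
      rcases lt_or_ge a 1.5 with hlt | hge15
      · -- 1.14 ≤ a < 1.5 : f strictly decreasing, f a ≤ f 1.14 < 0
        have hm1 : (1.14:ℝ) ∈ Set.Icc (1.13:ℝ) 1.5 := by norm_num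
        have hm2 : a ∈ Set.Icc (1.13:ℝ) 1.5 := ⟨by linarith, hlt.le⟩
        rcases eq_or_lt_of_le hge with heq | hlt2
        · rw [← heq] at hfa; linarith [h14]
        · have h' : sin (2*a) - 2*a/3 < sin (2*(1.14:ℝ)) - 2*1.14/3 :=
            fanti hm1 hm2 hlt2
          linarith [hfa, h14, h']
      · -- a ≥ 1.5 : sin(2a) = 2a/3 ≥ 1 forces a = 1.5 and sin 3 = 1, impossible
        have hs1 : sin (2*a) ≤ 1 := Real.sin_le_one _
        have heq : a = 1.5 := by
          have hsa : sin (2*a) = 2*a/3 := by linarith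
          have h1 : 2*a/3 ≤ 1 := by rw [← hsa]; exact hs1
          linarith
        rw [heq] at hfa
        have h3 : (2 * (1.5:ℝ)) = 3 := by norm_num
        rw [h3] at hfa
        have hsin3 : sin 3 = sin (π - 3) := (Real.sin_pi_sub 3).symm
        have hle : sin (π - 3) ≤ π - 3 := Real.sin_le (by linarith)
        have hlt1 : sin 3 < 1 := by rw [hsin3]; linarith
        have : sin 3 = 2 * (1.5:ℝ) / 3 := by linarith [hfa]
        norm_num at this
        linarith
  -- Part 1: existence and uniqueness
  have hcont : ContinuousOn (fun a : ℝ => sin (2*a) - 2*a/3) (Set.Icc 1.13 1.14) := by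
    apply Continuous.continuousOn; continuity
  have hivt := intermediate_value_Ioo' (by norm_num : (1.13:ℝ) ≤ 1.14) hcont
  have h0mem : (0:ℝ) ∈ Set.Ioo ((fun a : ℝ => sin (2*a) - 2*a/3) 1.14)
      ((fun a : ℝ => sin (2*a) - 2*a/3) 1.13) := ⟨h14, h13⟩
  obtain ⟨c, hc, hfc⟩ := hivt h0mem
  have hfc' : sin (2*c) - 2*c/3 = 0 := hfc
  have hcpos : 0 < c := by
    have h := hc.1; norm_num at h; linarith
  constructor
  · refine ⟨c, ⟨hcpos, hfc'⟩, ?_⟩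
    intro b hb
    have hbm := part2 b hb.1 hb.2
    have hcm := part2 c hcpos hfc'
    have hbIcc : b ∈ Set.Icc (1.13:ℝ) 1.5 :=
      ⟨hbm.1.le, by have h := hbm.2; norm_num at h; linarith⟩
    have hcIcc : c ∈ Set.Icc (1.13:ℝ) 1.5 :=
      ⟨hcm.1.le, by have h := hcm.2; norm_num at h; linarith⟩
    by_contra hne
    rcases lt_or_gt_of_ne hne with hlt | hgt
    · have h' : sin (2*c) - 2*c/3 < sin (2*b) - 2*b/3 := fanti hbIcc hcIcc hlt
      linarith [hb.2, hfc', h']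
    · have h' : sin (2*b) - 2*b/3 < sin (2*c) - 2*c/3 := fanti hcIcc hbIcc hgt
      linarith [hb.2, hfc', h']
  · exact part2
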